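/- For every orientation of the Wagner graph V8, every pair of adjacent vertices u, v, and every pre-colouring p : {u,v} → {1,2}, there exists an acyclic 2-colouring of the orientation extending p. -/
import Mathlib


def AcyclicOn {V : Type*} (A : V → V → Prop) (X : Set V) : Prop :=
  ∀ v ∈ X, ¬ Relation.TransGen (fun a b => a ∈ X ∧ b ∈ X ∧ A a b) v v

def IsAcyclicColoring {V : Type*} (A : V → V → Prop) (k : ℕ) (c : V → Fin k) : Prop :=
  ∀ i : Fin k, AcyclicOn A {v | c v = i}

def IsOrientation {V : Type*} (G : SimpleGraph V) (A : V → V → Prop) : Prop :=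
  (∀ a b, A a b → ¬ A b a) ∧ (∀ a b, G.Adj a b ↔ (A a b ∨ A b a))

def SimpleGraph.IsMinor {W V : Type*} (H : SimpleGraph W) (G : SimpleGraph V) : Prop :=
  ∃ f : W → Set V, (∀ w, (f w).Nonempty) ∧ (∀ w, (G.induce (f w)).Connected) ∧
    (Pairwise fun w w' => Disjoint (f w) (f w')) ∧
    ∀ ⦃w w'⦄, H.Adj w w' → ∃ u ∈ f w, ∃ v ∈ f w', G.Adj u v

def SimpleGraph.Planar {V : Type*} (G : SimpleGraph V) : Prop :=
  ¬ (completeGraph (Fin 5)).IsMinor G ∧ ¬ (completeBipartiteGraph (Fin 3) (Fin 3)).IsMinor G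

def IsPlanarTriangulation {V : Type*} [Finite V] (G : SimpleGraph V) : Prop :=
  3 ≤ Nat.card V ∧ G.Planar ∧ ∀ H : SimpleGraph V, G ≤ H → H.Planar → H = G

def IsTriangle {V : Type*} (G : SimpleGraph V) (a b c : V) : Prop :=
  G.Adj a b ∧ G.Adj a c ∧ G.Adj b c

def IsFacialTriangle {V : Type*} (G : SimpleGraph V) (a b c : V) : Prop :=
  IsTriangle G a b c ∧ (G.induce {v | v ≠ a ∧ v ≠ b ∧ v ≠ c}).Preconnected

def IsSeparatingTriangle {V : Type*} (G : SimpleGraph V) (a b c : V) : Prop :=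
  IsTriangle G a b c ∧ ¬ (G.induce {v | v ≠ a ∧ v ≠ b ∧ v ≠ c}).Preconnected

def FourConnected {V : Type*} [Finite V] (G : SimpleGraph V) : Prop :=
  5 ≤ Nat.card V ∧ ∀ S : Set V, Nat.card S ≤ 3 → (G.induce Sᶜ).Connected

def WagnerGraph : SimpleGraph (ZMod 8) :=
  SimpleGraph.fromRel (fun i j => j = i + 1 ∨ j = i + 4)

instance : DecidableRel WagnerGraph.Adj :=
  fun a b => decidable_of_iff _ (SimpleGraph.fromRel_adj _ a b).symm

def MatchCol (c : ZMod 8 → Fin 2) : Prop :=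
  ∀ a b d : ZMod 8, c a = c b → c b = c d →
    WagnerGraph.Adj a b → WagnerGraph.Adj b d → d = a

instance (c : ZMod 8 → Fin 2) : Decidable (MatchCol c) := by unfold MatchCol; infer_instance

def pat1 : ZMod 8 → Fin 2 := fun x => if x = 0 ∨ x = 1 ∨ x = 3 ∨ x = 6 then 0 else 1
def pat2 : ZMod 8 → Fin 2 := fun x => if x = 0 ∨ x = 2 ∨ x = 4 ∨ x = 6 then 0 else 1

lemma matchcol_pat1 : MatchCol pat1 := by decide
lemma matchcol_pat2 : MatchCol pat2 := by decide

lemma adj_shift : ∀ u a b : ZMod 8,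
    WagnerGraph.Adj (a - u) (b - u) ↔ WagnerGraph.Adj a b := by decide

lemma matchcol_shift (pat : ZMod 8 → Fin 2) (hp : MatchCol pat) (u : ZMod 8) (g : Fin 2) :
    MatchCol (fun x => pat (x - u) + g) := by
  intro a b d h1 h2 hab hbd
  simp only [add_left_inj] at h1 h2
  have h := hp _ _ _ h1 h2 ((adj_shift u a b).mpr hab) ((adj_shift u b d).mpr hbd)
  exact sub_left_inj.mp h

lemma acyclic_of_matchcol (A : ZMod 8 → ZMod 8 → Prop) (hA : IsOrientation WagnerGraph A)
    (c : ZMod 8 → Fin 2) (hm : MatchCol c) : IsAcyclicColoring A 2 c := by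
  intro i v hv hT
  have key : ∀ a b : ZMod 8,
      Relation.TransGen (fun a b => a ∈ {x | c x = i} ∧ b ∈ {x | c x = i} ∧ A a b) a b →
      c a = i ∧ c b = i ∧ A a b := by
    intro a b h
    induction h with
    | single h => exact h
    | tail h1 h2 ih =>
      obtain ⟨ha, hb, hab⟩ := ih
      obtain ⟨hb', hd, hbd⟩ := h2
      have adj1 : WagnerGraph.Adj a _ := (hA.2 _ _).mpr (Or.inl hab)
      have adj2 : WagnerGraph.Adj _ _ := (hA.2 _ _).mpr (Or.inl hbd)
      have hda := hm _ _ _ (ha.trans hb.symm) (hb.trans hd.symm) adj1 adj2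
      subst hda
      exact absurd hbd (hA.1 _ _ hab)
  obtain ⟨_, _, hvv⟩ := key v v hT
  exact hA.1 v v hvv hvv

lemma build (A : ZMod 8 → ZMod 8 → Prop) (hA : IsOrientation WagnerGraph A)
    (pat : ZMod 8 → Fin 2) (hm : MatchCol pat) (u k : ZMod 8) (pu pv : Fin 2)
    (h0 : pat 0 = 0) (hk : pat k + pu = pv) :
    ∃ c : ZMod 8 → Fin 2, IsAcyclicColoring A 2 c ∧ c u = pu ∧ c (u + k) = pv := by
  refine ⟨fun x => pat (x - u) + pu,
    acyclic_of_matchcol A hA _ (matchcol_shift pat hm u pu), ?_, ?_⟩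
  · simp [h0]
  · simpa [add_sub_cancel_left] using hk


/-- every orientation of V8 admits an acyclic 2-colouring extending any
pre-colouring of two adjacent vertices. -/
theorem stmt_4 (A : ZMod 8 → ZMod 8 → Prop) (hA : IsOrientation WagnerGraph A)
    (u v : ZMod 8) (huv : WagnerGraph.Adj u v) (pu pv : Fin 2) :
    ∃ c : ZMod 8 → Fin 2, IsAcyclicColoring A 2 c ∧ c u = pu ∧ c v = pv := by
  rw [WagnerGraph, SimpleGraph.fromRel_adj] at huv
  obtain ⟨hne, (h | h) | (h | h)⟩ := huv
  · -- v = u + 1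
    subst h
    by_cases hpp : pu = pv
    · exact build A hA pat1 matchcol_pat1 u 1 pu pv rfl (by subst hpp; fin_cases pu <;> decide)
    · exact build A hA pat2 matchcol_pat2 u 1 pu pv rfl
        (by revert hpp; fin_cases pu <;> fin_cases pv <;> decide)
  · -- v = u + 4
    subst h
    by_cases hpp : pu = pv
    · exact build A hA pat2 matchcol_pat2 u 4 pu pv rfl (by subst hpp; fin_cases pu <;> decide)
    · exact build A hA pat1 matchcol_pat1 u 4 pu pv rfl
        (by revert hpp; fin_cases pu <;> fin_cases pv <;> decide)
  · -- u = v + 1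
    subst h
    by_cases hpp : pu = pv
    · obtain ⟨c, hc, h1, h2⟩ := build A hA pat1 matchcol_pat1 v 1 pv pu rfl
        (by subst hpp ; fin_cases pu <;> decide)
      exact ⟨c, hc, h2, h1⟩
    · obtain ⟨c, hc, h1, h2⟩ := build A hA pat2 matchcol_pat2 v 1 pv pu rfl
        (by revert hpp; fin_cases pu <;> fin_cases pv <;> decide)
      exact ⟨c, hc, h2, h1⟩
  · -- u = v + 4, hence v = u + 4
    have h' : v = u + 4 := by
      rw [h, add_assoc, show (4:ZMod 8) + 4 = 0 by decide, add_zero]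
    subst h'
    by_cases hpp : pu = pv
    · exact build A hA pat2 matchcol_pat2 u 4 pu pv rfl (by subst hpp; fin_cases pu <;> decide)
    · exact build A hA pat1 matchcol_pat1 u 4 pu pv rfl
        (by revert hpp; fin_cases pu <;> fin_cases pv <;> decide)
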